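/- There exists no binary orthogonal array of parameters (11, 112, 4); that is, there is no function C : Fin 112 → (Fin 11 → ZMod 2) such that for every set of 4 distinct column indices and every tuple v ∈ (ZMod 2)^4, exactly 7 rows of C agree with v on those columns. -/

import Mathlib

open Finset

namespace BOA14

variable (C : Fin 112 → Fin 11 → ZMod 2)

/-- the ±1 version of an entry -/
def eps (r : Fin 112) (j : Fin 11) : ℤ := if C r j = 0 then 1 else -1

/-- character sum over a set of columns -/
def T (S : Finset (Fin 11)) : ℤ := ∑ r : Fin 112, ∏ j ∈ S, eps C r j

/-- number of rows agreeing with v on S -/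
def cnt (S : Finset (Fin 11)) (v : Fin 11 → ZMod 2) : ℕ :=
  (Finset.univ.filter (fun r => ∀ j ∈ S, C r j = v j)).card

lemma eps_cases (r : Fin 112) (j : Fin 11) : eps C r j = 1 ∨ eps C r j = -1 := by
  unfold eps; split <;> simp

lemma zmod2_ne_zero (x : ZMod 2) : ¬ x = 0 ↔ x = 1 := by revert x; decide

lemma cnt_split (S : Finset (Fin 11)) (v : Fin 11 → ZMod 2) (j : Fin 11) (hj : j ∉ S) :
    cnt C S v = cnt C (insert j S) (Function.update v j 0)
      + cnt C (insert j S) (Function.update v j 1) := by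
  classical
  have key : ∀ b : ZMod 2,
      (Finset.univ.filter (fun r => ∀ i ∈ insert j S, C r i = Function.update v j b i))
      = ((Finset.univ.filter (fun r => ∀ i ∈ S, C r i = v i)).filter (fun r => C r j = b)) := by
    intro b
    rw [Finset.filter_filter]
    apply Finset.filter_congr
    intro r _
    constructor
    · intro h
      refine ⟨fun i hi => ?_, ?_⟩
      · have hij : i ≠ j := fun hh => hj (hh ▸ hi)
        have := h i (mem_insert_of_mem hi)
        rwa [Function.update_apply, if_neg hij] at this
      · have := h j (mem_insert_self j S)
        rwa [Function.update_self] at this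
    · rintro ⟨h1, h2⟩ i hi
      rcases Finset.mem_insert.mp hi with h | h
      · subst h
        rwa [Function.update_self]
      · have hij : i ≠ j := fun hh => hj (hh ▸ h)
        rw [Function.update_apply, if_neg hij]
        exact h1 i h
  unfold cnt
  rw [key 0, key 1]
  rw [← Finset.card_filter_add_card_filter_not
    (s := Finset.univ.filter (fun r => ∀ i ∈ S, C r i = v i)) (p := fun r => C r j = 0)]
  congr 1
  have : Finset.filter (fun a => ¬ C a j = 0) (Finset.univ.filter (fun r => ∀ i ∈ S, C r i = v i))
      = Finset.filter (fun r => C r j = 1) (Finset.univ.filter (fun r => ∀ i ∈ S, C r i = v i)) :=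
    Finset.filter_congr (fun r _ => zmod2_ne_zero (C r j))
  rw [this]

variable (hC : ∀ S : Finset (Fin 11), S.card = 4 →
    ∀ v : Fin 11 → ZMod 2,
      (Finset.univ.filter (fun r => ∀ j ∈ S, C r j = v j)).card = 7)

include hC

lemma cnt_small : ∀ (n : ℕ) (S : Finset (Fin 11)) (v : Fin 11 → ZMod 2),
    S.card + n = 4 → cnt C S v = 7 * 2 ^ n := by
  intro n
  induction n with
  | zero =>
    intro S v h
    simpa [cnt] using hC S (by omega) v
  | succ n ih =>
    intro S v h
    obtain ⟨j, hj⟩ : ∃ j, j ∉ S := by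
      by_contra hall
      push_neg at hall
      have hu : S = Finset.univ := Finset.eq_univ_iff_forall.mpr hall
      rw [hu, Finset.card_univ] at h
      simp only [Fintype.card_fin] at h
      omega
    rw [cnt_split C S v j hj,
      ih (insert j S) _ (by rw [Finset.card_insert_of_notMem hj]; omega),
      ih (insert j S) _ (by rw [Finset.card_insert_of_notMem hj]; omega)]
    ring

omit hC

lemma sum_powerset_T (S : Finset (Fin 11)) :
    ∑ W ∈ S.powerset, T C W = 2 ^ S.card * (cnt C S 0 : ℤ) := by
  unfold T
  rw [Finset.sum_comm]
  have hrow : ∀ r : Fin 112, (∑ W ∈ S.powerset, ∏ j ∈ W, eps C r j)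
      = ∏ j ∈ S, (eps C r j + 1) := by
    intro r
    rw [Finset.prod_add]
    exact (Finset.sum_congr rfl fun W _ => by simp).symm
  have hpt : ∀ r : Fin 112, (∏ j ∈ S, (eps C r j + 1))
      = if (∀ j ∈ S, C r j = (0 : Fin 11 → ZMod 2) j) then (2 : ℤ) ^ S.card else 0 := by
    intro r
    by_cases h : ∀ j ∈ S, C r j = 0
    · rw [if_pos (by simpa using h)]
      calc (∏ j ∈ S, (eps C r j + 1)) = ∏ _j ∈ S, (2 : ℤ) := by
            apply Finset.prod_congr rfl
            intro j hj
            unfold eps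
            rw [if_pos (h j hj)]
            norm_num
        _ = 2 ^ S.card := by rw [Finset.prod_const]
    · rw [if_neg (by simpa using h)]
      push_neg at h
      obtain ⟨j, hj, hne⟩ := h
      apply Finset.prod_eq_zero hj
      unfold eps
      rw [if_neg hne]
      ring
  calc (∑ r : Fin 112, ∑ W ∈ S.powerset, ∏ j ∈ W, eps C r j)
      = ∑ r : Fin 112, if (∀ j ∈ S, C r j = (0 : Fin 11 → ZMod 2) j)
          then (2 : ℤ) ^ S.card else 0 := by
        exact Finset.sum_congr rfl fun r _ => (hrow r).trans (hpt r)
    _ = (cnt C S 0 : ℤ) * 2 ^ S.card := by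
        rw [← Finset.sum_filter, Finset.sum_const, nsmul_eq_mul]
        unfold cnt
        norm_num
    _ = 2 ^ S.card * (cnt C S 0 : ℤ) := by ring

lemma T_empty : T C ∅ = 112 := by
  unfold T; simp

lemma odd_cast_zmod2 (m : ℤ) (hm : Odd m) : ((m : ZMod 2)) = 1 := by
  obtain ⟨k, rfl⟩ := hm
  push_cast
  rw [show ((2 : ZMod 2)) = 0 by decide]
  ring

include hC

lemma T_small : ∀ S : Finset (Fin 11), S.Nonempty → S.card ≤ 4 → T C S = 0 := by
  intro S
  induction S using Finset.strongInduction with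
  | _ S ih =>
    intro hne hcard
    have h1 := sum_powerset_T C S
    rw [cnt_small C hC (4 - S.card) S 0 (by omega)] at h1
    have h2 : ∑ W ∈ S.powerset, T C W = T C S + ∑ W ∈ S.powerset.erase S, T C W := by
      rw [← Finset.sum_erase_add _ _ (Finset.mem_powerset_self S)]
      ring
    have h3 : ∑ W ∈ S.powerset.erase S, T C W = 112 := by
      rw [Finset.sum_eq_single_of_mem ∅ ?_ ?_]
      · exact T_empty C
      · rw [Finset.mem_erase]
        exact ⟨Ne.symm (Finset.nonempty_iff_ne_empty.mp hne), Finset.empty_mem_powerset S⟩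
      · intro W hW hWne
        rw [Finset.mem_erase, Finset.mem_powerset] at hW
        exact ih W (lt_of_le_of_ne hW.2 hW.1)
          (Finset.nonempty_iff_ne_empty.mpr hWne)
          (le_trans (Finset.card_le_card hW.2) hcard)
    have h4 : (2 : ℤ) ^ S.card * ((7 * 2 ^ (4 - S.card) : ℕ) : ℤ) = 112 := by
      push_cast
      rw [← mul_assoc, mul_comm ((2:ℤ) ^ S.card) 7, mul_assoc, ← pow_add]
      have : S.card + (4 - S.card) = 4 := by omega
      rw [this]
      norm_num
    rw [h2, h3] at h1
    rw [h4] at h1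
    linarith

/-- sums of finitely many T-values that are each 16 * odd -/
lemma sum_sixteen_odd (F : Finset (Finset (Fin 11)))
    (h : ∀ W ∈ F, ∃ m : ℤ, Odd m ∧ T C W = 16 * m) :
    ∃ M : ℤ, (∑ W ∈ F, T C W = 16 * M) ∧ ((M : ZMod 2) = (F.card : ZMod 2)) := by
  classical
  induction F using Finset.induction_on with
  | empty => exact ⟨0, by simp, by simp⟩
  | insert a s hW ih =>
    obtain ⟨m, hm, hTm⟩ := h a (Finset.mem_insert_self a s)
    obtain ⟨M, hM, hMp⟩ := ih (fun W hWs => h W (Finset.mem_insert_of_mem hWs))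
    refine ⟨m + M, ?_, ?_⟩
    · rw [Finset.sum_insert hW, hTm, hM]; ring
    · rw [Finset.card_insert_of_notMem hW]
      push_cast
      rw [odd_cast_zmod2 m hm, hMp]
      push_cast
      ring

lemma T_five (S : Finset (Fin 11)) (h5 : S.card = 5) :
    ∃ m : ℤ, Odd m ∧ T C S = 16 * m := by
  have h1 := sum_powerset_T C S
  have h2 : ∑ W ∈ S.powerset, T C W = T C S + ∑ W ∈ S.powerset.erase S, T C W := by
    rw [← Finset.sum_erase_add _ _ (Finset.mem_powerset_self S)]
    ring
  have h3 : ∑ W ∈ S.powerset.erase S, T C W = 112 := by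
    rw [Finset.sum_eq_single_of_mem ∅ ?_ ?_]
    · exact T_empty C
    · rw [Finset.mem_erase]
      refine ⟨?_, Finset.empty_mem_powerset S⟩
      intro hcon
      rw [← hcon] at h5
      simp at h5
    · intro W hW hWne
      rw [Finset.mem_erase, Finset.mem_powerset] at hW
      have hlt : W.card < 5 := by
        rw [← h5]
        exact Finset.card_lt_card (lt_of_le_of_ne hW.2 hW.1)
      exact T_small C hC W (Finset.nonempty_iff_ne_empty.mpr hWne) (by omega)
  rw [h2, h3, h5] at h1
  refine ⟨2 * (cnt C S 0 : ℤ) - 7, ⟨(cnt C S 0 : ℤ) - 4, by ring⟩, by linarith⟩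

lemma sum_powersetCard_mid (S : Finset (Fin 11)) (j : ℕ) (hj1 : 1 ≤ j) (hj4 : j ≤ 4) :
    ∑ W ∈ Finset.powersetCard j S, T C W = 0 := by
  apply Finset.sum_eq_zero
  intro W hW
  rw [Finset.mem_powersetCard] at hW
  apply T_small C hC W _ (by omega)
  rw [← Finset.card_pos, hW.2]
  omega

lemma T_six (S : Finset (Fin 11)) (h6 : S.card = 6) :
    ∃ m : ℤ, Odd m ∧ T C S = 16 * m := by
  have h1 := sum_powerset_T C S
  rw [Finset.sum_powerset, h6] at h1
  have e0 : ∑ W ∈ Finset.powersetCard 0 S, T C W = 112 := by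
    rw [Finset.powersetCard_zero]
    simp [T_empty C]
  obtain ⟨M, hM, hMp⟩ := sum_sixteen_odd C hC (Finset.powersetCard 5 S)
    (fun W hW => T_five C hC W (Finset.mem_powersetCard.mp hW).2)
  have e6 : ∑ W ∈ Finset.powersetCard 6 S, T C W = T C S := by
    rw [← h6, Finset.powersetCard_self]
    simp
  have hcard5 : (Finset.powersetCard 5 S).card = 6 := by
    rw [Finset.card_powersetCard, h6]
    decide
  have hMeven : ∃ M' : ℤ, M = 2 * M' := by
    have : (M : ZMod 2) = 0 := by rw [hMp, hcard5]; decide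
    have hdvd : (2 : ℤ) ∣ M := by
      rwa [ZMod.intCast_zmod_eq_zero_iff_dvd] at this
    obtain ⟨M', hM'⟩ := hdvd
    exact ⟨M', hM'⟩
  obtain ⟨M', rfl⟩ := hMeven
  have expand : ∑ j ∈ Finset.range 7, ∑ W ∈ Finset.powersetCard j S, T C W
      = 112 + 16 * (2 * M') + T C S := by
    rw [Finset.sum_range_succ, Finset.sum_range_succ, Finset.sum_range_succ,
      Finset.sum_range_succ, Finset.sum_range_succ, Finset.sum_range_succ,
      Finset.sum_range_one]
    rw [e0, e6, hM,
      sum_powersetCard_mid C hC S 1 (by norm_num) (by norm_num),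
      sum_powersetCard_mid C hC S 2 (by norm_num) (by norm_num),
      sum_powersetCard_mid C hC S 3 (by norm_num) (by norm_num),
      sum_powersetCard_mid C hC S 4 (by norm_num) (by norm_num)]
    ring
  rw [expand] at h1
  refine ⟨4 * (cnt C S 0 : ℤ) - 7 - 2 * M', ⟨2 * (cnt C S 0 : ℤ) - 4 - M', by ring⟩, ?_⟩
  have : (2:ℤ) ^ 6 = 64 := by norm_num
  rw [this] at h1
  linarith

lemma T_seven (S : Finset (Fin 11)) (h7 : S.card = 7) :
    ∃ m : ℤ, Odd m ∧ T C S = 16 * m := by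
  have h1 := sum_powerset_T C S
  rw [Finset.sum_powerset, h7] at h1
  have e0 : ∑ W ∈ Finset.powersetCard 0 S, T C W = 112 := by
    rw [Finset.powersetCard_zero]
    simp [T_empty C]
  obtain ⟨M5, hM5, hM5p⟩ := sum_sixteen_odd C hC (Finset.powersetCard 5 S)
    (fun W hW => T_five C hC W (Finset.mem_powersetCard.mp hW).2)
  obtain ⟨M6, hM6, hM6p⟩ := sum_sixteen_odd C hC (Finset.powersetCard 6 S)
    (fun W hW => T_six C hC W (Finset.mem_powersetCard.mp hW).2)
  have e7 : ∑ W ∈ Finset.powersetCard 7 S, T C W = T C S := by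
    rw [← h7, Finset.powersetCard_self]
    simp
  have hcard5 : (Finset.powersetCard 5 S).card = 21 := by
    rw [Finset.card_powersetCard, h7]; decide
  have hcard6 : (Finset.powersetCard 6 S).card = 7 := by
    rw [Finset.card_powersetCard, h7]; decide
  have hMeven : ∃ K : ℤ, M5 + M6 = 2 * K := by
    have : ((M5 + M6 : ℤ) : ZMod 2) = 0 := by
      push_cast
      rw [hM5p, hM6p, hcard5, hcard6]
      decide
    have hdvd : (2 : ℤ) ∣ (M5 + M6) := by
      rwa [ZMod.intCast_zmod_eq_zero_iff_dvd] at this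
    obtain ⟨K, hK⟩ := hdvd
    exact ⟨K, hK⟩
  obtain ⟨K, hK⟩ := hMeven
  have expand : ∑ j ∈ Finset.range 8, ∑ W ∈ Finset.powersetCard j S, T C W
      = 112 + 16 * M5 + 16 * M6 + T C S := by
    rw [Finset.sum_range_succ, Finset.sum_range_succ, Finset.sum_range_succ,
      Finset.sum_range_succ, Finset.sum_range_succ, Finset.sum_range_succ,
      Finset.sum_range_succ, Finset.sum_range_one]
    rw [e0, e7, hM5, hM6,
      sum_powersetCard_mid C hC S 1 (by norm_num) (by norm_num),
      sum_powersetCard_mid C hC S 2 (by norm_num) (by norm_num),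
      sum_powersetCard_mid C hC S 3 (by norm_num) (by norm_num),
      sum_powersetCard_mid C hC S 4 (by norm_num) (by norm_num)]
    ring
  rw [expand] at h1
  refine ⟨8 * (cnt C S 0 : ℤ) - 7 - 2 * K, ⟨4 * (cnt C S 0 : ℤ) - 4 - K, by ring⟩, ?_⟩
  have : (2:ℤ) ^ 7 = 128 := by norm_num
  rw [this] at h1
  linarith

lemma Tsq_ge (S : Finset (Fin 11)) (h : ∃ m : ℤ, Odd m ∧ T C S = 16 * m) :
    256 ≤ T C S ^ 2 := by
  obtain ⟨m, hm, hT⟩ := h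
  have hm0 : m ≠ 0 := by
    rintro rfl
    exact ((Int.not_odd_iff_even.mpr Even.zero)) hm
  have h1 : 1 ≤ m ^ 2 := by
    have := Int.one_le_abs (by omega : m ≠ 0)
    nlinarith [abs_nonneg m, sq_abs m]
  rw [hT]
  nlinarith

omit hC

/-! ### The certificate -/

lemma sum_pair (W : Finset (Fin 11)) :
    ∑ r : Fin 112, ∑ r' : Fin 112, ∏ j ∈ W, (eps C r j * eps C r' j) = T C W ^ 2 := by
  unfold T
  rw [sq, Finset.sum_mul_sum]
  apply Finset.sum_congr rfl
  intro r _
  apply Finset.sum_congr rfl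
  intro r' _
  rw [Finset.prod_mul_distrib]

lemma eta_cases (r r' : Fin 112) (j : Fin 11) :
    eps C r j * eps C r' j = 1 ∨ eps C r j * eps C r' j = -1 := by
  rcases eps_cases C r j with h | h <;> rcases eps_cases C r' j with h' | h' <;>
    rw [h, h'] <;> norm_num

lemma term_nonneg (b c : Fin 11) (r r' : Fin 112) :
    0 ≤ (1 - eps C r b * eps C r' b)
      * ∏ j ∈ Finset.univ \ {b, c}, (1 + eps C r j * eps C r' j) := by
  apply mul_nonneg
  · rcases eta_cases C r r' b with h | h <;> rw [h] <;> norm_num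
  · apply Finset.prod_nonneg
    intro j _
    rcases eta_cases C r r' j with h | h <;> rw [h] <;> norm_num

lemma expand_pair (b c : Fin 11) :
    (∑ r : Fin 112, ∑ r' : Fin 112, (1 - eps C r b * eps C r' b)
        * ∏ j ∈ Finset.univ \ {b, c}, (1 + eps C r j * eps C r' j))
    = ∑ S ∈ ((Finset.univ : Finset (Fin 11)) \ {b, c}).powerset,
        (T C S ^ 2 - T C (insert b S) ^ 2) := by
  have hbS : ∀ S ∈ ((Finset.univ : Finset (Fin 11)) \ {b, c}).powerset, b ∉ S := by
    intro S hS hbS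
    have := Finset.mem_powerset.mp hS hbS
    simp [Finset.mem_sdiff] at this
  have hexp : ∀ (r r' : Fin 112),
      (∏ j ∈ (Finset.univ : Finset (Fin 11)) \ {b, c}, (1 + eps C r j * eps C r' j))
      = ∑ S ∈ ((Finset.univ : Finset (Fin 11)) \ {b, c}).powerset,
          ∏ j ∈ S, (eps C r j * eps C r' j) := by
    intro r r'
    have h1 : (∏ j ∈ (Finset.univ : Finset (Fin 11)) \ {b, c}, (1 + eps C r j * eps C r' j))
        = ∏ j ∈ (Finset.univ : Finset (Fin 11)) \ {b, c}, (eps C r j * eps C r' j + 1) := by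
      apply Finset.prod_congr rfl
      intros
      ring
    rw [h1, Finset.prod_add]
    apply Finset.sum_congr rfl
    intros
    simp
  calc (∑ r : Fin 112, ∑ r' : Fin 112, (1 - eps C r b * eps C r' b)
        * ∏ j ∈ Finset.univ \ {b, c}, (1 + eps C r j * eps C r' j))
      = ∑ r : Fin 112, ∑ r' : Fin 112,
          ∑ S ∈ ((Finset.univ : Finset (Fin 11)) \ {b, c}).powerset,
            (∏ j ∈ S, (eps C r j * eps C r' j)
              - ∏ j ∈ insert b S, (eps C r j * eps C r' j)) := by
        apply Finset.sum_congr rfl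
        intro r _
        apply Finset.sum_congr rfl
        intro r' _
        rw [hexp r r', sub_mul, one_mul, Finset.mul_sum, ← Finset.sum_sub_distrib]
        apply Finset.sum_congr rfl
        intro S hS
        congr 1
        rw [Finset.prod_insert (hbS S hS)]
    _ = ∑ r : Fin 112, ∑ S ∈ ((Finset.univ : Finset (Fin 11)) \ {b, c}).powerset,
          ∑ r' : Fin 112, (∏ j ∈ S, (eps C r j * eps C r' j)
              - ∏ j ∈ insert b S, (eps C r j * eps C r' j)) := by
        apply Finset.sum_congr rfl
        intro r _
        exact Finset.sum_comm
    _ = ∑ S ∈ ((Finset.univ : Finset (Fin 11)) \ {b, c}).powerset,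
          ∑ r : Fin 112, ∑ r' : Fin 112, (∏ j ∈ S, (eps C r j * eps C r' j)
              - ∏ j ∈ insert b S, (eps C r j * eps C r' j)) := Finset.sum_comm
    _ = ∑ S ∈ ((Finset.univ : Finset (Fin 11)) \ {b, c}).powerset,
          (T C S ^ 2 - T C (insert b S) ^ 2) := by
        apply Finset.sum_congr rfl
        intro S hS
        simp only [Finset.sum_sub_distrib]
        rw [sum_pair C S, sum_pair C (insert b S)]

include hC

lemma final : False := by
  classical
  set Y : ℤ := ∑ p ∈ (Finset.univ : Finset (Fin 11)).offDiag,
      ∑ r : Fin 112, ∑ r' : Fin 112,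
        (1 - eps C r p.1 * eps C r' p.1)
          * ∏ j ∈ Finset.univ \ {p.1, p.2}, (1 + eps C r j * eps C r' j) with hYdef
  have hY0 : 0 ≤ Y := by
    rw [hYdef]
    apply Finset.sum_nonneg
    intro p _
    apply Finset.sum_nonneg
    intro r _
    apply Finset.sum_nonneg
    intro r' _
    exact term_nonneg C p.1 p.2 r r'
  have hY1 : Y = (∑ p ∈ (Finset.univ : Finset (Fin 11)).offDiag,
        ∑ S ∈ ((Finset.univ : Finset (Fin 11)) \ {p.1, p.2}).powerset, T C S ^ 2)
      - (∑ p ∈ (Finset.univ : Finset (Fin 11)).offDiag,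
        ∑ S ∈ ((Finset.univ : Finset (Fin 11)) \ {p.1, p.2}).powerset,
          T C (insert p.1 S) ^ 2) := by
    rw [hYdef, ← Finset.sum_sub_distrib]
    apply Finset.sum_congr rfl
    intro p _
    rw [expand_pair C p.1 p.2, Finset.sum_sub_distrib]
  -- first double sum
  have part1 : ∀ p : Fin 11 × Fin 11,
      (∑ S ∈ ((Finset.univ : Finset (Fin 11)) \ {p.1, p.2}).powerset, T C S ^ 2)
      = ∑ W ∈ (Finset.univ : Finset (Fin 11)).powerset,
          if W ⊆ Finset.univ \ {p.1, p.2} then T C W ^ 2 else 0 := by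
    intro p
    rw [← Finset.sum_filter]
    congr 1
    ext W
    simp [Finset.mem_powerset, Finset.subset_univ]
  have hcount1 : ∀ W : Finset (Fin 11),
      (Finset.univ : Finset (Fin 11)).offDiag.filter
          (fun p => W ⊆ Finset.univ \ {p.1, p.2}) = (Wᶜ).offDiag := by
    intro W
    ext p
    simp only [Finset.mem_filter, Finset.mem_offDiag, Finset.mem_univ, true_and,
      Finset.subset_sdiff, Finset.subset_univ, Finset.disjoint_insert_right,
      Finset.disjoint_singleton_right, Finset.mem_compl]
    tauto
  have e1 : (∑ p ∈ (Finset.univ : Finset (Fin 11)).offDiag,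
        ∑ S ∈ ((Finset.univ : Finset (Fin 11)) \ {p.1, p.2}).powerset, T C S ^ 2)
      = ∑ W ∈ (Finset.univ : Finset (Fin 11)).powerset,
          ((Wᶜ.card * Wᶜ.card - Wᶜ.card : ℕ) : ℤ) * T C W ^ 2 := by
    rw [Finset.sum_congr rfl (fun p _ => part1 p), Finset.sum_comm]
    apply Finset.sum_congr rfl
    intro W _
    rw [← Finset.sum_filter, hcount1 W, Finset.sum_const, Finset.offDiag_card, nsmul_eq_mul]
  -- second double sum
  have part2 : ∀ p ∈ (Finset.univ : Finset (Fin 11)).offDiag,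
      (∑ S ∈ ((Finset.univ : Finset (Fin 11)) \ {p.1, p.2}).powerset, T C (insert p.1 S) ^ 2)
      = ∑ W ∈ (Finset.univ : Finset (Fin 11)).powerset,
          if p.1 ∈ W ∧ p.2 ∉ W then T C W ^ 2 else 0 := by
    intro p hp
    have hne : p.1 ≠ p.2 := (Finset.mem_offDiag.mp hp).2.2
    rw [← Finset.sum_filter]
    refine Finset.sum_bij' (fun S _ => insert p.1 S) (fun W _ => W.erase p.1) ?_ ?_ ?_ ?_ ?_
    · intro S hS
      rw [Finset.mem_powerset] at hS
      simp only [Finset.mem_filter, Finset.mem_powerset]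
      refine ⟨Finset.subset_univ _, Finset.mem_insert_self _ _, ?_⟩
      intro hmem
      rcases Finset.mem_insert.mp hmem with h | h
      · exact hne h.symm
      · have := hS h
        simp [Finset.mem_sdiff] at this
    · intro W hW
      rw [Finset.mem_filter] at hW
      rw [Finset.mem_powerset]
      intro x hx
      rw [Finset.mem_erase] at hx
      simp only [Finset.mem_sdiff, Finset.mem_univ, true_and, Finset.mem_insert,
        Finset.mem_singleton]
      push_neg
      exact ⟨hx.1, fun hc => hW.2.2 (hc ▸ hx.2)⟩
    · intro S hS
      apply Finset.erase_insert
      intro hbS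
      have := Finset.mem_powerset.mp hS hbS
      simp [Finset.mem_sdiff] at this
    · intro W hW
      rw [Finset.mem_filter] at hW
      exact Finset.insert_erase hW.2.1
    · intro S hS
      rfl
  have hcount2 : ∀ W : Finset (Fin 11),
      (Finset.univ : Finset (Fin 11)).offDiag.filter (fun p => p.1 ∈ W ∧ p.2 ∉ W)
        = W ×ˢ Wᶜ := by
    intro W
    ext p
    simp only [Finset.mem_filter, Finset.mem_offDiag, Finset.mem_univ, true_and,
      Finset.mem_product, Finset.mem_compl]
    constructor
    · rintro ⟨-, h1, h2⟩
      exact ⟨h1, h2⟩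
    · rintro ⟨h1, h2⟩
      exact ⟨fun h => h2 (h ▸ h1), h1, h2⟩
  have e2 : (∑ p ∈ (Finset.univ : Finset (Fin 11)).offDiag,
        ∑ S ∈ ((Finset.univ : Finset (Fin 11)) \ {p.1, p.2}).powerset, T C (insert p.1 S) ^ 2)
      = ∑ W ∈ (Finset.univ : Finset (Fin 11)).powerset,
          ((W.card * Wᶜ.card : ℕ) : ℤ) * T C W ^ 2 := by
    rw [Finset.sum_congr rfl part2, Finset.sum_comm]
    apply Finset.sum_congr rfl
    intro W _
    rw [← Finset.sum_filter, hcount2 W, Finset.sum_const, Finset.card_product,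
      nsmul_eq_mul]
  have hY3 : Y = ∑ W ∈ (Finset.univ : Finset (Fin 11)).powerset,
      (((Wᶜ.card * Wᶜ.card - Wᶜ.card : ℕ) : ℤ) - ((W.card * Wᶜ.card : ℕ) : ℤ))
        * T C W ^ 2 := by
    rw [hY1, e1, e2, ← Finset.sum_sub_distrib]
    apply Finset.sum_congr rfl
    intro W _
    ring
  -- coefficient evaluation
  have coeffW : ∀ (jj : ℕ) (W : Finset (Fin 11)),
      W ∈ Finset.powersetCard jj (Finset.univ : Finset (Fin 11)) →
      (((Wᶜ.card * Wᶜ.card - Wᶜ.card : ℕ) : ℤ) - ((W.card * Wᶜ.card : ℕ) : ℤ))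
      = (((11 - jj) * (11 - jj) - (11 - jj) : ℕ) : ℤ) - ((jj * (11 - jj) : ℕ) : ℤ) := by
    intro jj W hW
    have hc : W.card = jj := (Finset.mem_powersetCard.mp hW).2
    have hcc : Wᶜ.card = 11 - jj := by
      rw [Finset.card_compl, hc]
      simp
    rw [hc, hcc]
  have hcard11 : ((Finset.univ : Finset (Fin 11)).card) = 11 := by simp
  -- blocks
  have b0 : (∑ W ∈ Finset.powersetCard 0 (Finset.univ : Finset (Fin 11)),
      (((Wᶜ.card * Wᶜ.card - Wᶜ.card : ℕ) : ℤ) - ((W.card * Wᶜ.card : ℕ) : ℤ))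
        * T C W ^ 2) = 1379840 := by
    rw [Finset.powersetCard_zero, Finset.sum_singleton, T_empty C]
    norm_num
  have bsmall : ∀ jj : ℕ, 1 ≤ jj → jj ≤ 4 →
      (∑ W ∈ Finset.powersetCard jj (Finset.univ : Finset (Fin 11)),
      (((Wᶜ.card * Wᶜ.card - Wᶜ.card : ℕ) : ℤ) - ((W.card * Wᶜ.card : ℕ) : ℤ))
        * T C W ^ 2) = 0 := by
    intro jj h1 h4
    apply Finset.sum_eq_zero
    intro W hW
    have hc : W.card = jj := (Finset.mem_powersetCard.mp hW).2
    have : T C W = 0 := by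
      apply T_small C hC W _ (by omega)
      rw [← Finset.card_pos, hc]
      omega
    rw [this]
    ring
  have b5 : (∑ W ∈ Finset.powersetCard 5 (Finset.univ : Finset (Fin 11)),
      (((Wᶜ.card * Wᶜ.card - Wᶜ.card : ℕ) : ℤ) - ((W.card * Wᶜ.card : ℕ) : ℤ))
        * T C W ^ 2) = 0 := by
    apply Finset.sum_eq_zero
    intro W hW
    rw [coeffW 5 W hW]
    norm_num
  have b6 : (∑ W ∈ Finset.powersetCard 6 (Finset.univ : Finset (Fin 11)),
      (((Wᶜ.card * Wᶜ.card - Wᶜ.card : ℕ) : ℤ) - ((W.card * Wᶜ.card : ℕ) : ℤ))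
        * T C W ^ 2) ≤ -1182720 := by
    have hb : ∀ W ∈ Finset.powersetCard 6 (Finset.univ : Finset (Fin 11)),
        (((Wᶜ.card * Wᶜ.card - Wᶜ.card : ℕ) : ℤ) - ((W.card * Wᶜ.card : ℕ) : ℤ))
          * T C W ^ 2 ≤ -2560 := by
      intro W hW
      have hsq : 256 ≤ T C W ^ 2 :=
        Tsq_ge C hC W (T_six C hC W (Finset.mem_powersetCard.mp hW).2)
      rw [coeffW 6 W hW]
      norm_num
      nlinarith
    calc (∑ W ∈ Finset.powersetCard 6 (Finset.univ : Finset (Fin 11)),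
        (((Wᶜ.card * Wᶜ.card - Wᶜ.card : ℕ) : ℤ) - ((W.card * Wᶜ.card : ℕ) : ℤ))
          * T C W ^ 2)
        ≤ (Finset.powersetCard 6 (Finset.univ : Finset (Fin 11))).card • (-2560 : ℤ) :=
          Finset.sum_le_card_nsmul _ _ _ hb
      _ = -1182720 := by
          rw [Finset.card_powersetCard, hcard11, show Nat.choose 11 6 = 462 by decide]
          norm_num
  have b7 : (∑ W ∈ Finset.powersetCard 7 (Finset.univ : Finset (Fin 11)),
      (((Wᶜ.card * Wᶜ.card - Wᶜ.card : ℕ) : ℤ) - ((W.card * Wᶜ.card : ℕ) : ℤ))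
        * T C W ^ 2) ≤ -1351680 := by
    have hb : ∀ W ∈ Finset.powersetCard 7 (Finset.univ : Finset (Fin 11)),
        (((Wᶜ.card * Wᶜ.card - Wᶜ.card : ℕ) : ℤ) - ((W.card * Wᶜ.card : ℕ) : ℤ))
          * T C W ^ 2 ≤ -4096 := by
      intro W hW
      have hsq : 256 ≤ T C W ^ 2 :=
        Tsq_ge C hC W (T_seven C hC W (Finset.mem_powersetCard.mp hW).2)
      rw [coeffW 7 W hW]
      norm_num
      nlinarith
    calc (∑ W ∈ Finset.powersetCard 7 (Finset.univ : Finset (Fin 11)),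
        (((Wᶜ.card * Wᶜ.card - Wᶜ.card : ℕ) : ℤ) - ((W.card * Wᶜ.card : ℕ) : ℤ))
          * T C W ^ 2)
        ≤ (Finset.powersetCard 7 (Finset.univ : Finset (Fin 11))).card • (-4096 : ℤ) :=
          Finset.sum_le_card_nsmul _ _ _ hb
      _ = -1351680 := by
          rw [Finset.card_powersetCard, hcard11, show Nat.choose 11 7 = 330 by decide]
          norm_num
  have bneg : ∀ jj : ℕ, 8 ≤ jj → jj ≤ 11 →
      (∑ W ∈ Finset.powersetCard jj (Finset.univ : Finset (Fin 11)),
      (((Wᶜ.card * Wᶜ.card - Wᶜ.card : ℕ) : ℤ) - ((W.card * Wᶜ.card : ℕ) : ℤ))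
        * T C W ^ 2) ≤ 0 := by
    intro jj h8 h11
    apply Finset.sum_nonpos
    intro W hW
    have hsq : 0 ≤ T C W ^ 2 := sq_nonneg _
    have hcoef : (((Wᶜ.card * Wᶜ.card - Wᶜ.card : ℕ) : ℤ) - ((W.card * Wᶜ.card : ℕ) : ℤ)) ≤ 0 := by
      rw [coeffW jj W hW]
      interval_cases jj <;> norm_num
    exact mul_nonpos_of_nonpos_of_nonneg hcoef hsq
  -- assemble
  have hYle : Y ≤ -1154560 := by
    rw [hY3, Finset.sum_powerset, hcard11]
    rw [Finset.sum_range_succ, Finset.sum_range_succ, Finset.sum_range_succ,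
      Finset.sum_range_succ, Finset.sum_range_succ, Finset.sum_range_succ,
      Finset.sum_range_succ, Finset.sum_range_succ, Finset.sum_range_succ,
      Finset.sum_range_succ, Finset.sum_range_succ, Finset.sum_range_one]
    have h1 := bsmall 1 (by norm_num) (by norm_num)
    have h2 := bsmall 2 (by norm_num) (by norm_num)
    have h3 := bsmall 3 (by norm_num) (by norm_num)
    have h4 := bsmall 4 (by norm_num) (by norm_num)
    have h8 := bneg 8 (by norm_num) (by norm_num)
    have h9 := bneg 9 (by norm_num) (by norm_num)
    have h10 := bneg 10 (by norm_num) (by norm_num)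
    have h11 := bneg 11 (by norm_num) (by norm_num)
    linarith [b0, h1, h2, h3, h4, b5, b6, b7, h8, h9, h10, h11]
  linarith

end BOA14

theorem stmt_14 :
    ¬ ∃ C : Fin 112 → (Fin 11 → ZMod 2),
      ∀ S : Finset (Fin 11), S.card = 4 →
        ∀ v : Fin 11 → ZMod 2,
          (Finset.univ.filter (fun r => ∀ j ∈ S, C r j = v j)).card = 7 := by
  rintro ⟨C, hC⟩
  exact BOA14.final C hC
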